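/- If u : ℝ → ℝ^p is differentiable with u'(t) = c · D₁ h(t) for all t, for some function h : ℝ → ℝ^q, then the function t ↦ D₂ u(t) is constant. In particular, the spatially discretized Maxwell evolutions ∂_t d̃² = c 𝕕̃₁ h̃¹ and ∂_t b² = −c 𝕕₁ e¹ exactly and strongly conserve the discrete Gauss constraints 𝕕̃₂ d̃² and 𝕕₂ b². -/

import Mathlib

/-- If `u : ℝ → ℝᵖ` is differentiable with `u'(t) = c · D₁ h(t)` and
`D₂ D₁ = 0` (consecutive incidence matrices, `d ∘ d = 0`), then `t ↦ D₂ u(t)` is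
constant: the discrete Gauss constraints are exactly conserved. -/
theorem discrete_gauss_conservation
    {p q r : ℕ} (D₁ : Matrix (Fin p) (Fin q) ℝ) (D₂ : Matrix (Fin r) (Fin p) ℝ)
    (hDD : D₂ * D₁ = 0) (c : ℝ)
    (u : ℝ → (Fin p → ℝ)) (h : ℝ → (Fin q → ℝ))
    (hu : ∀ t, HasDerivAt u (c • D₁.mulVec (h t)) t) :
    ∀ t₁ t₂ : ℝ, D₂.mulVec (u t₁) = D₂.mulVec (u t₂) := by
  have key : ∀ t, HasDerivAt (fun s => D₂.mulVec (u s)) 0 t := by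
    intro t
    have h2 := (Matrix.mulVecLin D₂).toContinuousLinearMap.hasFDerivAt.comp_hasDerivAt t (hu t)
    have h0 : D₂.mulVec (c • D₁.mulVec (h t)) = 0 := by
      rw [Matrix.mulVec_smul, Matrix.mulVec_mulVec, hDD]
      simp
    simpa [Function.comp_def, Matrix.mulVecLin_apply, Matrix.mulVec_mulVec, hDD] using h2
  intro t₁ t₂
  have hd : Differentiable ℝ (fun s => D₂.mulVec (u s)) :=
    fun t => (key t).differentiableAt
  have := is_const_of_deriv_eq_zero hd (fun x => (key x).deriv) t₁ t₂
  exact this
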